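/- Logarithmic divergence of the renormalization function: Let ρ be a Schwartz function on ℝ³ and let a, A : ℝ³ → Sym(3,ℝ) be measurable with C₀‖ξ‖² ≤ ξ·a(x)ξ ≤ C₁‖ξ‖² and C₀‖ξ‖² ≤ ξ·A(X)ξ ≤ C₁‖ξ‖² for all x, X, ξ ∈ ℝ³ and some 0 < C₀ ≤ C₁. Then for every κ ≥ 1 and X ∈ ℝ³ the integral E^κ(X) = −(1/2)(2π)^{−3} ∫_{ℝ³} (h₀(X,ξ)+1)^{−1/2} K(X,ξ)(K(X,ξ)+1)^{−2} |ρ̂(ξ/κ)|² dξ is absolutely convergent, and there exists a constant C such that |E^κ(X)| ≤ C log κ for all κ ≥ 2 and all X ∈ ℝ³. -/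

import Mathlib

open MeasureTheory Filter

/-- The Fourier transform `ρ̂(ξ) = ∫ e^{-i x·ξ} ρ(x) dx` of a Schwartz function on ℝ³. -/
noncomputable def fourierHat (ρ : SchwartzMap (EuclideanSpace ℝ (Fin 3)) ℂ)
    (ξ : EuclideanSpace ℝ (Fin 3)) : ℂ :=
  ∫ x : EuclideanSpace ℝ (Fin 3),
    Complex.exp (-Complex.I * ((inner ℝ x ξ : ℝ) : ℂ)) * ρ x

/-- The quadratic form `ξ ↦ ξ · M(x) ξ` associated to a matrix-valued function. -/
def qform (M : EuclideanSpace ℝ (Fin 3) → Matrix (Fin 3) (Fin 3) ℝ)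
    (x ξ : EuclideanSpace ℝ (Fin 3)) : ℝ :=
  ∑ i, ∑ j, ξ i * M x i j * ξ j

lemma fourierHat_eq (ρ : SchwartzMap (EuclideanSpace ℝ (Fin 3)) ℂ)
    (η : EuclideanSpace ℝ (Fin 3)) :
    fourierHat ρ η = (SchwartzMap.fourierTransformCLM ℝ ρ) ((2 * Real.pi)⁻¹ • η) := by
  rw [SchwartzMap.fourierTransformCLM_apply, SchwartzMap.fourier_coe, Real.fourier_eq']
  unfold fourierHat
  congr 1 with v
  rw [real_inner_smul_right, smul_eq_mul]
  have h : -2 * Real.pi * ((2 * Real.pi)⁻¹ * (inner ℝ v η : ℝ)) = -(inner ℝ v η : ℝ) := by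
    field_simp
  rw [h]
  push_cast
  ring_nf

lemma fourierHat_continuous (ρ : SchwartzMap (EuclideanSpace ℝ (Fin 3)) ℂ) :
    Continuous (fourierHat ρ) := by
  have : fourierHat ρ = fun η => (SchwartzMap.fourierTransformCLM ℝ ρ)
      ((2 * Real.pi)⁻¹ • η) := funext (fourierHat_eq ρ)
  rw [this]
  exact (SchwartzMap.fourierTransformCLM ℝ ρ).2.continuous.comp
    (continuous_const_smul _)

lemma fourierHat_bounds (ρ : SchwartzMap (EuclideanSpace ℝ (Fin 3)) ℂ) :
    ∃ M D : ℝ, 0 < M ∧ 0 < D ∧ (∀ η, ‖fourierHat ρ η‖ ≤ M) ∧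
      (∀ η, ‖η‖ * ‖fourierHat ρ η‖ ≤ D) := by
  set g := SchwartzMap.fourierTransformCLM ℝ ρ with hg
  obtain ⟨M, hM0, hM⟩ := g.decay 0 0
  obtain ⟨D, hD0, hD⟩ := g.decay 1 0
  refine ⟨M, (2 * Real.pi) * D, hM0, by positivity, fun η => ?_, fun η => ?_⟩
  · rw [fourierHat_eq]
    simpa [norm_iteratedFDeriv_zero, hg] using hM ((2 * Real.pi)⁻¹ • η)
  · rw [fourierHat_eq]
    have := hD ((2 * Real.pi)⁻¹ • η)
    rw [pow_one, norm_iteratedFDeriv_zero, norm_smul] at this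
    have hπ : (0:ℝ) < 2 * Real.pi := by positivity
    have : (2 * Real.pi)⁻¹ * (‖η‖ * ‖g ((2 * Real.pi)⁻¹ • η)‖) ≤ D := by
      simpa [norm_inv, Real.norm_eq_abs, abs_of_pos hπ, abs_of_pos Real.pi_pos,
        mul_assoc] using this
    calc ‖η‖ * ‖g ((2 * Real.pi)⁻¹ • η)‖
        = (2 * Real.pi) * ((2 * Real.pi)⁻¹ * (‖η‖ * ‖g ((2 * Real.pi)⁻¹ • η)‖)) := by
          field_simp
      _ ≤ (2 * Real.pi) * D := mul_le_mul_of_nonneg_left this hπ.le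

lemma qform_continuous (M : EuclideanSpace ℝ (Fin 3) → Matrix (Fin 3) (Fin 3) ℝ)
    (x : EuclideanSpace ℝ (Fin 3)) : Continuous (fun ξ => qform M x ξ) := by
  unfold qform
  refine continuous_finset_sum _ fun i _ => continuous_finset_sum _ fun j _ => ?_
  exact (((EuclideanSpace.proj i : EuclideanSpace ℝ (Fin 3) →L[ℝ] ℝ).continuous).mul
    continuous_const).mul (EuclideanSpace.proj j : EuclideanSpace ℝ (Fin 3) →L[ℝ] ℝ).continuous

set_option maxHeartbeats 2000000 in
/-- Logarithmic divergence of the renormalization function: the integral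
`E^κ(X) = -(1/2)(2π)^{-3} ∫ (h₀(X,ξ)+1)^{-1/2} K(X,ξ)(K(X,ξ)+1)^{-2}|ρ̂(ξ/κ)|² dξ`
is absolutely convergent and `|E^κ(X)| ≤ C log κ` for `κ ≥ 2`, uniformly in `X`. -/
theorem renorm_function_log_divergence (ρ : SchwartzMap (EuclideanSpace ℝ (Fin 3)) ℂ)
    (a A : EuclideanSpace ℝ (Fin 3) → Matrix (Fin 3) (Fin 3) ℝ)
    (C₀ C₁ : ℝ) (hC₀ : 0 < C₀) (hC₀₁ : C₀ ≤ C₁)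
    (ha_symm : ∀ x, (a x).IsSymm) (hA_symm : ∀ X, (A X).IsSymm)
    (ha_meas : ∀ i j, Measurable fun x => a x i j)
    (hA_meas : ∀ i j, Measurable fun X => A X i j)
    (ha_ell : ∀ x ξ : EuclideanSpace ℝ (Fin 3),
      C₀ * ‖ξ‖ ^ 2 ≤ qform a x ξ ∧ qform a x ξ ≤ C₁ * ‖ξ‖ ^ 2)
    (hA_ell : ∀ X ξ : EuclideanSpace ℝ (Fin 3),
      C₀ * ‖ξ‖ ^ 2 ≤ qform A X ξ ∧ qform A X ξ ≤ C₁ * ‖ξ‖ ^ 2) :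
    (∀ κ : ℝ, 1 ≤ κ → ∀ X : EuclideanSpace ℝ (Fin 3),
      Integrable (fun ξ : EuclideanSpace ℝ (Fin 3) =>
        (Real.sqrt (qform a X ξ + 1))⁻¹ * qform A X ξ * ((qform A X ξ + 1) ^ 2)⁻¹ *
          ‖fourierHat ρ (κ⁻¹ • ξ)‖ ^ 2)) ∧
    ∃ C : ℝ, ∀ κ : ℝ, 2 ≤ κ → ∀ X : EuclideanSpace ℝ (Fin 3),
      |(-(1 / 2) * ((2 * Real.pi) ^ 3)⁻¹ *
          ∫ ξ : EuclideanSpace ℝ (Fin 3),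
            (Real.sqrt (qform a X ξ + 1))⁻¹ * qform A X ξ * ((qform A X ξ + 1) ^ 2)⁻¹ *
              ‖fourierHat ρ (κ⁻¹ • ξ)‖ ^ 2)| ≤ C * Real.log κ := by
  obtain ⟨M, D, hM0, hD0, hMb, hDb⟩ := fourierHat_bounds ρ
  set c₀ : ℝ := 4 * max (M ^ 2) (D ^ 2) with hc₀def
  set c₁ : ℝ := max 1 (Real.sqrt C₀)⁻¹ * max 1 C₀⁻¹ with hc₁def
  have hc₀pos : 0 < c₀ := by positivity
  have hc₁pos : 0 < c₁ := by positivity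
  set B : ℝ := c₀ * c₁ with hBdef
  have hBpos : 0 < B := mul_pos hc₀pos hc₁pos
  set V : ℝ := (volume (Metric.ball (0 : EuclideanSpace ℝ (Fin 3)) 1)).toReal with hVdef
  have hV0 : 0 ≤ V := ENNReal.toReal_nonneg
  have key : ∀ κ : ℝ, 1 ≤ κ → ∀ X : EuclideanSpace ℝ (Fin 3),
      Integrable (fun ξ : EuclideanSpace ℝ (Fin 3) =>
        (Real.sqrt (qform a X ξ + 1))⁻¹ * qform A X ξ * ((qform A X ξ + 1) ^ 2)⁻¹ *
          ‖fourierHat ρ (κ⁻¹ • ξ)‖ ^ 2) ∧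
      0 ≤ (∫ ξ : EuclideanSpace ℝ (Fin 3),
        (Real.sqrt (qform a X ξ + 1))⁻¹ * qform A X ξ * ((qform A X ξ + 1) ^ 2)⁻¹ *
          ‖fourierHat ρ (κ⁻¹ • ξ)‖ ^ 2) ∧
      (∫ ξ : EuclideanSpace ℝ (Fin 3),
        (Real.sqrt (qform a X ξ + 1))⁻¹ * qform A X ξ * ((qform A X ξ + 1) ^ 2)⁻¹ *
          ‖fourierHat ρ (κ⁻¹ • ξ)‖ ^ 2) ≤ 3 * V * B * (3 / 2 + Real.log κ) := by
    intro κ hκ X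
    have hκ0 : (0:ℝ) < κ := lt_of_lt_of_le one_pos hκ
    set F : EuclideanSpace ℝ (Fin 3) → ℝ := fun ξ =>
      (Real.sqrt (qform a X ξ + 1))⁻¹ * qform A X ξ * ((qform A X ξ + 1) ^ 2)⁻¹ *
        ‖fourierHat ρ (κ⁻¹ • ξ)‖ ^ 2 with hFdef
    have hqa0 : ∀ ξ : EuclideanSpace ℝ (Fin 3), 0 ≤ qform a X ξ := fun ξ =>
      le_trans (by positivity) (ha_ell X ξ).1
    have hqA0 : ∀ ξ : EuclideanSpace ℝ (Fin 3), 0 ≤ qform A X ξ := fun ξ =>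
      le_trans (by positivity) (hA_ell X ξ).1
    -- nonnegativity of the integrand
    have hF0 : ∀ ξ, 0 ≤ F ξ := by
      intro ξ
      have h1 := hqA0 ξ
      have h2 : (0:ℝ) ≤ (Real.sqrt (qform a X ξ + 1))⁻¹ := by positivity
      have h3 : (0:ℝ) ≤ ((qform A X ξ + 1) ^ 2)⁻¹ := by positivity
      have h4 : (0:ℝ) ≤ ‖fourierHat ρ (κ⁻¹ • ξ)‖ ^ 2 := by positivity
      exact mul_nonneg (mul_nonneg (mul_nonneg h2 h1) h3) h4
    -- the radial majorant
    set G : EuclideanSpace ℝ (Fin 3) → ℝ := fun ξ =>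
      B * ((κ / (κ + ‖ξ‖)) ^ 2 * ((max 1 ‖ξ‖ ) ^ 3)⁻¹) with hGdef
    have hG0 : ∀ ξ, 0 ≤ G ξ := by
      intro ξ
      have h1 : (0:ℝ) < max 1 ‖ξ‖ := lt_of_lt_of_le one_pos (le_max_left _ _)
      positivity
    -- pointwise bound F ≤ G
    have hFle : ∀ ξ, F ξ ≤ G ξ := by
      intro ξ
      set r := ‖ξ‖ with hr
      have hr0 : (0:ℝ) ≤ r := norm_nonneg ξ
      have hden : (0:ℝ) < κ + r := by linarith
      set qa := qform a X ξ with hqa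
      set qA := qform A X ξ with hqA
      have h1 : C₀ * r ^ 2 ≤ qa := (ha_ell X ξ).1
      have h2 : C₀ * r ^ 2 ≤ qA := (hA_ell X ξ).1
      have h3 : (0:ℝ) ≤ qa := hqa0 ξ
      have h4 : (0:ℝ) ≤ qA := hqA0 ξ
      have hqA1 : (0:ℝ) < qA + 1 := by linarith
      -- middle factor bound
      have hmid : qA * ((qA + 1) ^ 2)⁻¹ ≤ (qA + 1)⁻¹ := by
        have e1 : qA * ((qA + 1) ^ 2)⁻¹ = qA / (qA + 1) ^ 2 := by ring
        have e2 : (qA + 1)⁻¹ = (qA + 1) / (qA + 1) ^ 2 := by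
          field_simp
        rw [e1, e2]
        gcongr
        linarith
      have hmid0 : (0:ℝ) ≤ qA * ((qA + 1) ^ 2)⁻¹ := by positivity
      -- the non-squared factor bound
      have hP : (Real.sqrt (qa + 1))⁻¹ * qA * ((qA + 1) ^ 2)⁻¹ ≤
          c₁ * ((max 1 r) ^ 3)⁻¹ := by
        have hsq1 : (1:ℝ) ≤ Real.sqrt (qa + 1) := by
          rw [Real.one_le_sqrt]
          linarith
        have hsq0 : (0:ℝ) < Real.sqrt (qa + 1) := lt_of_lt_of_le one_pos hsq1
        have hc1ge : (1:ℝ) ≤ c₁ := by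
          rw [hc₁def]
          nlinarith [le_max_left (1:ℝ) (Real.sqrt C₀)⁻¹, le_max_left (1:ℝ) C₀⁻¹]
        rcases le_total r 1 with hr1 | hr1
        · have hmax : max 1 r = 1 := max_eq_left hr1
          have hle1 : (Real.sqrt (qa + 1))⁻¹ * qA * ((qA + 1) ^ 2)⁻¹ ≤ 1 := by
            have i1 : (Real.sqrt (qa + 1))⁻¹ ≤ 1 := by
              rw [inv_le_one_iff₀]; right; exact hsq1
            have i2 : qA * ((qA + 1) ^ 2)⁻¹ ≤ 1 :=
              hmid.trans (by rw [inv_le_one_iff₀]; right; linarith)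
            calc (Real.sqrt (qa + 1))⁻¹ * qA * ((qA + 1) ^ 2)⁻¹
                = (Real.sqrt (qa + 1))⁻¹ * (qA * ((qA + 1) ^ 2)⁻¹) := by ring
              _ ≤ 1 * 1 := mul_le_mul i1 i2 hmid0 zero_le_one
              _ = 1 := one_mul 1
          rw [hmax]
          simpa using hle1.trans hc1ge
        · have hmax : max 1 r = r := max_eq_right hr1
          have hrpos : (0:ℝ) < r := lt_of_lt_of_le one_pos hr1
          have hsC₀ : (0:ℝ) < Real.sqrt C₀ := Real.sqrt_pos.mpr hC₀
          have hs1 : Real.sqrt C₀ * r ≤ Real.sqrt (qa + 1) := by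
            have : Real.sqrt (C₀ * r ^ 2) ≤ Real.sqrt (qa + 1) :=
              Real.sqrt_le_sqrt (by linarith)
            rwa [Real.sqrt_mul hC₀.le, Real.sqrt_sq hr0] at this
          have i1 : (Real.sqrt (qa + 1))⁻¹ ≤ (Real.sqrt C₀ * r)⁻¹ := by
            apply inv_anti₀ (by positivity) hs1
          have i2 : qA * ((qA + 1) ^ 2)⁻¹ ≤ (C₀ * r ^ 2)⁻¹ :=
            hmid.trans (inv_anti₀ (by positivity) (by linarith))
          have e3 : (Real.sqrt C₀ * r)⁻¹ * (C₀ * r ^ 2)⁻¹ =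
              ((Real.sqrt C₀)⁻¹ * C₀⁻¹) * (r ^ 3)⁻¹ := by
            field_simp
          have hc1le : (Real.sqrt C₀)⁻¹ * C₀⁻¹ ≤ c₁ := by
            rw [hc₁def]
            exact mul_le_mul (le_max_right _ _) (le_max_right _ _) (by positivity)
              (by positivity)
          calc (Real.sqrt (qa + 1))⁻¹ * qA * ((qA + 1) ^ 2)⁻¹
              = (Real.sqrt (qa + 1))⁻¹ * (qA * ((qA + 1) ^ 2)⁻¹) := by ring
            _ ≤ (Real.sqrt C₀ * r)⁻¹ * (C₀ * r ^ 2)⁻¹ :=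
                mul_le_mul i1 i2 hmid0 (by positivity)
            _ = ((Real.sqrt C₀)⁻¹ * C₀⁻¹) * (r ^ 3)⁻¹ := e3
            _ ≤ c₁ * ((max 1 r) ^ 3)⁻¹ := by
                rw [hmax]
                exact mul_le_mul_of_nonneg_right hc1le (by positivity)
      have hP0 : (0:ℝ) ≤ (Real.sqrt (qa + 1))⁻¹ * qA * ((qA + 1) ^ 2)⁻¹ := by
        have : (0:ℝ) ≤ (Real.sqrt (qa + 1))⁻¹ := by positivity
        exact mul_nonneg (mul_nonneg this h4) (by positivity)
      -- the squared Fourier factor bound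
      have hS : ‖fourierHat ρ (κ⁻¹ • ξ)‖ ^ 2 ≤ c₀ * (κ / (κ + r)) ^ 2 := by
        rcases le_total r κ with hrκ | hrκ
        · have hhalf : (1:ℝ) / 2 ≤ κ / (κ + r) := by
            rw [div_le_div_iff₀ two_pos hden]
            linarith
          have hsq : ((1:ℝ) / 2) ^ 2 ≤ (κ / (κ + r)) ^ 2 :=
            pow_le_pow_left₀ (by norm_num) hhalf 2
          calc ‖fourierHat ρ (κ⁻¹ • ξ)‖ ^ 2
              ≤ M ^ 2 := pow_le_pow_left₀ (norm_nonneg _) (hMb _) 2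
            _ ≤ max (M ^ 2) (D ^ 2) := le_max_left _ _
            _ = c₀ * ((1:ℝ) / 2) ^ 2 := by rw [hc₀def]; ring
            _ ≤ c₀ * (κ / (κ + r)) ^ 2 := mul_le_mul_of_nonneg_left hsq hc₀pos.le
        · have hrpos : (0:ℝ) < r := lt_of_lt_of_le hκ0 hrκ
          have hnorm : ‖κ⁻¹ • ξ‖ = κ⁻¹ * r := by
            rw [norm_smul, Real.norm_eq_abs, abs_of_pos (by positivity)]
          have hD1 : κ⁻¹ * r * ‖fourierHat ρ (κ⁻¹ • ξ)‖ ≤ D := by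
            rw [← hnorm]; exact hDb _
          have hρle : ‖fourierHat ρ (κ⁻¹ • ξ)‖ ≤ D * κ / r := by
            rw [le_div_iff₀ hrpos]
            have := mul_le_mul_of_nonneg_left hD1 hκ0.le
            calc ‖fourierHat ρ (κ⁻¹ • ξ)‖ * r
                = κ * (κ⁻¹ * r * ‖fourierHat ρ (κ⁻¹ • ξ)‖) := by
                  field_simp
              _ ≤ κ * D := this
              _ = D * κ := mul_comm _ _
          have hsq : ‖fourierHat ρ (κ⁻¹ • ξ)‖ ^ 2 ≤ (D * κ / r) ^ 2 :=
            pow_le_pow_left₀ (norm_nonneg _) hρle 2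
          have h2r : κ / (2 * r) ≤ κ / (κ + r) := by
            gcongr
            linarith
          have hsq2 : (κ / (2 * r)) ^ 2 ≤ (κ / (κ + r)) ^ 2 :=
            pow_le_pow_left₀ (by positivity) h2r 2
          calc ‖fourierHat ρ (κ⁻¹ • ξ)‖ ^ 2
              ≤ (D * κ / r) ^ 2 := hsq
            _ = 4 * D ^ 2 * (κ / (2 * r)) ^ 2 := by
                field_simp
                ring
            _ ≤ 4 * D ^ 2 * (κ / (κ + r)) ^ 2 :=
                mul_le_mul_of_nonneg_left hsq2 (by positivity)
            _ ≤ c₀ * (κ / (κ + r)) ^ 2 := by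
                have : 4 * D ^ 2 ≤ c₀ := by
                  rw [hc₀def]
                  nlinarith [le_max_right (M ^ 2) (D ^ 2)]
                exact mul_le_mul_of_nonneg_right this (by positivity)
      -- combine
      have hcomb : F ξ ≤ (c₁ * ((max 1 r) ^ 3)⁻¹) * (c₀ * (κ / (κ + r)) ^ 2) := by
        have h5 : (0:ℝ) ≤ ‖fourierHat ρ (κ⁻¹ • ξ)‖ ^ 2 := by positivity
        have h6 : (0:ℝ) ≤ c₁ * ((max 1 r) ^ 3)⁻¹ := by
          have : (0:ℝ) < max 1 r := lt_of_lt_of_le one_pos (le_max_left _ _)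
          positivity
        exact mul_le_mul hP hS h5 h6
      calc F ξ ≤ (c₁ * ((max 1 r) ^ 3)⁻¹) * (c₀ * (κ / (κ + r)) ^ 2) := hcomb
        _ = G ξ := by rw [hGdef, hBdef]; ring
    -- continuity of F
    have hFcont : Continuous F := by
      have hsqa : Continuous fun ξ => (Real.sqrt (qform a X ξ + 1))⁻¹ := by
        refine Continuous.inv₀ (Real.continuous_sqrt.comp
          ((qform_continuous a X).add continuous_const)) fun ξ => ?_
        have := hqa0 ξ
        positivity
      have hqAc : Continuous fun ξ => ((qform A X ξ + 1) ^ 2)⁻¹ := by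
        refine Continuous.inv₀ (((qform_continuous A X).add continuous_const).pow 2)
          fun ξ => ?_
        have := hqA0 ξ
        positivity
      have hρc : Continuous fun ξ : EuclideanSpace ℝ (Fin 3) =>
          ‖fourierHat ρ (κ⁻¹ • ξ)‖ ^ 2 :=
        (((fourierHat_continuous ρ).comp (continuous_const_smul κ⁻¹)).norm).pow 2
      exact ((hsqa.mul (qform_continuous A X)).mul hqAc).mul hρc
    -- integrability of G
    have hGcont : Continuous G := by
      have h1 : Continuous fun ξ : EuclideanSpace ℝ (Fin 3) => κ / (κ + ‖ξ‖) := by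
        refine continuous_const.div (continuous_const.add continuous_norm) fun ξ => ?_
        have := norm_nonneg ξ
        positivity
      have h2 : Continuous fun ξ : EuclideanSpace ℝ (Fin 3) => ((max 1 ‖ξ‖) ^ 3)⁻¹ := by
        refine Continuous.inv₀ (((continuous_const.max continuous_norm)).pow 3) fun ξ => ?_
        have : (0:ℝ) < max 1 ‖ξ‖ := lt_of_lt_of_le one_pos (le_max_left _ _)
        positivity
      exact continuous_const.mul ((h1.pow 2).mul h2)
    have hGbound : ∀ ξ, G ξ ≤ B * κ ^ 2 * 4 * ((1 + ‖ξ‖) ^ 4)⁻¹ := by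
      intro ξ
      set r := ‖ξ‖ with hr
      have hr0 : (0:ℝ) ≤ r := norm_nonneg ξ
      have h1r : (0:ℝ) < 1 + r := by linarith
      have hmaxpos : (0:ℝ) < max 1 r := lt_of_lt_of_le one_pos (le_max_left _ _)
      have i1 : (κ / (κ + r)) ^ 2 ≤ κ ^ 2 * ((1 + r) ^ 2)⁻¹ := by
        have : κ / (κ + r) ≤ κ / (1 + r) := by
          gcongr
        calc (κ / (κ + r)) ^ 2 ≤ (κ / (1 + r)) ^ 2 :=
            pow_le_pow_left₀ (by positivity) this 2
          _ = κ ^ 2 * ((1 + r) ^ 2)⁻¹ := by rw [div_pow]; ring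
      have i2 : ((max 1 r) ^ 3)⁻¹ ≤ 4 * ((1 + r) ^ 2)⁻¹ := by
        have hm1 : (1:ℝ) ≤ max 1 r := le_max_left _ _
        have hstep : ((max 1 r) ^ 3)⁻¹ ≤ ((max 1 r) ^ 2)⁻¹ := by
          apply inv_anti₀ (by positivity)
          calc (max 1 r) ^ 2 = 1 * (max 1 r) ^ 2 := (one_mul _).symm
            _ ≤ max 1 r * (max 1 r) ^ 2 := by
                exact mul_le_mul_of_nonneg_right hm1 (by positivity)
            _ = (max 1 r) ^ 3 := by ring
        have h2m : 1 + r ≤ 2 * max 1 r := by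
          rcases le_total 1 r with h | h
          · rw [max_eq_right h]; linarith
          · rw [max_eq_left h]; linarith
        have hsq : (1 + r) ^ 2 ≤ 4 * (max 1 r) ^ 2 := by nlinarith
        have : ((max 1 r) ^ 2)⁻¹ ≤ 4 * ((1 + r) ^ 2)⁻¹ := by
          have e : 4 * ((1 + r) ^ 2)⁻¹ = ((1 + r) ^ 2 / 4)⁻¹ := by
            rw [inv_div]
            ring
          rw [e]
          exact inv_anti₀ (by positivity) (by linarith)
        exact hstep.trans this
      calc G ξ = B * ((κ / (κ + r)) ^ 2 * ((max 1 r) ^ 3)⁻¹) := rfl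
        _ ≤ B * ((κ ^ 2 * ((1 + r) ^ 2)⁻¹) * (4 * ((1 + r) ^ 2)⁻¹)) := by
            refine mul_le_mul_of_nonneg_left ?_ hBpos.le
            exact mul_le_mul i1 i2 (by positivity) (by positivity)
        _ = B * κ ^ 2 * 4 * ((1 + r) ^ 4)⁻¹ := by
            field_simp
    have hint4 : Integrable (fun ξ : EuclideanSpace ℝ (Fin 3) => ((1 + ‖ξ‖) ^ 4)⁻¹) := by
      have h := integrable_one_add_norm (E := EuclideanSpace ℝ (Fin 3)) (μ := volume)
        (r := 4) (by norm_num)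
      refine h.congr (Eventually.of_forall fun ξ => ?_)
      have h1 : (0:ℝ) < 1 + ‖ξ‖ := by positivity
      show (1 + ‖ξ‖ : ℝ) ^ (-(4:ℝ)) = ((1 + ‖ξ‖) ^ 4)⁻¹
      rw [← Real.rpow_natCast (1 + ‖ξ‖) 4, ← Real.rpow_neg h1.le]
      norm_num
    have hGint : Integrable G := by
      refine ((hint4.const_mul (B * κ ^ 2 * 4)).mono' hGcont.aestronglyMeasurable
        (Eventually.of_forall fun ξ => ?_))
      rw [Real.norm_eq_abs, abs_of_nonneg (hG0 ξ)]
      exact hGbound ξ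
    have hFint : Integrable F := by
      refine hGint.mono' hFcont.aestronglyMeasurable (Eventually.of_forall fun ξ => ?_)
      rw [Real.norm_eq_abs, abs_of_nonneg (hF0 ξ)]
      exact hFle ξ
    refine ⟨hFint, integral_nonneg hF0, ?_⟩
    -- polar coordinates for the majorant
    set φ : ℝ → ℝ := fun y => (κ / (κ + y)) ^ 2 * ((max 1 y) ^ 3)⁻¹ with hφdef
    set ψ : ℝ → ℝ := fun y => y ^ 2 * φ y with hψdef
    have hGeq : ∫ ξ, G ξ = B * ∫ ξ : EuclideanSpace ℝ (Fin 3), φ ‖ξ‖ := by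
      rw [← MeasureTheory.integral_const_mul]
    have hpolar : ∫ ξ : EuclideanSpace ℝ (Fin 3), φ ‖ξ‖ =
        3 * (V * ∫ y in Set.Ioi (0:ℝ), ψ y) := by
      rw [MeasureTheory.integral_fun_norm_addHaar volume φ, hVdef, hψdef]
      norm_num
      left
      simp [Measure.real]
    -- integrability of ψ on (0,∞)
    have hψcont : ContinuousOn ψ (Set.Ici (0:ℝ)) := by
      have h1 : ContinuousOn (fun y : ℝ => κ / (κ + y)) (Set.Ici (0:ℝ)) := by
        refine ContinuousOn.div continuousOn_const
          (continuousOn_const.add continuousOn_id) fun y hy => ?_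
        have : (0:ℝ) ≤ y := hy
        positivity
      have h2 : ContinuousOn (fun y : ℝ => ((max 1 y) ^ 3)⁻¹) (Set.Ici (0:ℝ)) := by
        refine ContinuousOn.inv₀ (((continuous_const.max continuous_id).continuousOn).pow 3)
          fun y _ => ?_
        have : (0:ℝ) < max 1 y := lt_of_lt_of_le one_pos (le_max_left _ _)
        positivity
      exact ((continuousOn_id.pow 2).mul ((h1.pow 2).mul h2))
    have hψ0 : ∀ y : ℝ, 0 ≤ y → 0 ≤ ψ y := by
      intro y hy
      have h1 : (0:ℝ) < max 1 y := lt_of_lt_of_le one_pos (le_max_left _ _)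
      have h2 : (0:ℝ) ≤ κ + y := by linarith
      positivity
    have hψle : ∀ y : ℝ, 0 < y → ψ y ≤ 8 * κ ^ 2 * ((1 + y) ^ 3)⁻¹ := by
      intro y hy
      have h1y : (0:ℝ) < 1 + y := by linarith
      have hdy : (0:ℝ) < κ + y := by linarith
      have hm1 : (1:ℝ) ≤ max 1 y := le_max_left _ _
      have step1 : y ^ 2 * (κ / (κ + y)) ^ 2 ≤ κ ^ 2 := by
        have e : y ^ 2 * (κ / (κ + y)) ^ 2 = (y * κ / (κ + y)) ^ 2 := by
          field_simp
        rw [e]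
        have hle : y * κ / (κ + y) ≤ κ := by
          rw [div_le_iff₀ hdy]
          nlinarith
        exact pow_le_pow_left₀ (by positivity) hle 2
      have step2 : ((max 1 y) ^ 3)⁻¹ ≤ 8 * ((1 + y) ^ 3)⁻¹ := by
        have h2m : 1 + y ≤ 2 * max 1 y := by
          rcases le_total 1 y with h | h
          · rw [max_eq_right h]; linarith
          · rw [max_eq_left h]; linarith
        have hcube : (1 + y) ^ 3 ≤ 8 * (max 1 y) ^ 3 := by
          calc (1 + y) ^ 3 ≤ (2 * max 1 y) ^ 3 := pow_le_pow_left₀ (by positivity) h2m 3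
            _ = 8 * (max 1 y) ^ 3 := by ring
        have e : 8 * ((1 + y) ^ 3)⁻¹ = ((1 + y) ^ 3 / 8)⁻¹ := by
          rw [inv_div]
          ring
        rw [e]
        exact inv_anti₀ (by positivity) (by linarith)
      calc ψ y = (y ^ 2 * (κ / (κ + y)) ^ 2) * ((max 1 y) ^ 3)⁻¹ := by
            rw [hψdef, hφdef]; ring
        _ ≤ κ ^ 2 * (8 * ((1 + y) ^ 3)⁻¹) := by
            refine mul_le_mul step1 step2 (by positivity) (by positivity)
        _ = 8 * κ ^ 2 * ((1 + y) ^ 3)⁻¹ := by ring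
    have hψint : IntegrableOn ψ (Set.Ioi (0:ℝ)) := by
      have hb : Integrable (fun y : ℝ => 8 * κ ^ 2 * (1 + ‖y‖) ^ (-(3:ℝ))) :=
        (integrable_one_add_norm (E := ℝ) (μ := volume) (r := 3) (by norm_num)).const_mul _
      refine Integrable.mono' (hb.restrict (s := Set.Ioi 0))
        ((hψcont.mono Set.Ioi_subset_Ici_self).aestronglyMeasurable measurableSet_Ioi) ?_
      refine (ae_restrict_iff' measurableSet_Ioi).2 (Eventually.of_forall fun y hy => ?_)
      have hy : (0:ℝ) < y := hy
      have h1y : (0:ℝ) < 1 + y := by linarith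
      rw [Real.norm_eq_abs, abs_of_nonneg (hψ0 y hy.le)]
      have e : (1 + ‖y‖ : ℝ) ^ (-(3:ℝ)) = ((1 + y) ^ 3)⁻¹ := by
        rw [Real.norm_eq_abs, abs_of_pos hy, ← Real.rpow_natCast (1 + y) 3,
          ← Real.rpow_neg h1y.le]
        norm_num
      rw [e]
      exact hψle y hy
    -- splitting of the half-line integral
    have hsub1 : Set.Ioc (0:ℝ) 1 ⊆ Set.Ioi (0:ℝ) := Set.Ioc_subset_Ioi_self
    have hsub2 : Set.Ioc (1:ℝ) κ ⊆ Set.Ioi (0:ℝ) := fun y hy =>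
      lt_trans one_pos hy.1
    have hsub3 : Set.Ioi κ ⊆ Set.Ioi (0:ℝ) := Set.Ioi_subset_Ioi hκ0.le
    have hi1 : IntegrableOn ψ (Set.Ioc (0:ℝ) 1) := hψint.mono_set hsub1
    have hi2 : IntegrableOn ψ (Set.Ioc (1:ℝ) κ) := hψint.mono_set hsub2
    have hi3 : IntegrableOn ψ (Set.Ioi κ) := hψint.mono_set hsub3
    have hi12 : IntegrableOn ψ (Set.Ioc (0:ℝ) κ) :=
      hψint.mono_set Set.Ioc_subset_Ioi_self
    have hsplit : ∫ y in Set.Ioi (0:ℝ), ψ y =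
        ((∫ y in Set.Ioc (0:ℝ) 1, ψ y) + ∫ y in Set.Ioc (1:ℝ) κ, ψ y) +
          ∫ y in Set.Ioi κ, ψ y := by
      rw [← Set.Ioc_union_Ioi_eq_Ioi hκ0.le,
        MeasureTheory.setIntegral_union (Set.Ioc_disjoint_Ioi le_rfl)
          measurableSet_Ioi hi12 hi3,
        ← Set.Ioc_union_Ioc_eq_Ioc zero_le_one hκ,
        MeasureTheory.setIntegral_union (Set.Ioc_disjoint_Ioc_of_le le_rfl)
          measurableSet_Ioc hi1 hi2]
    -- the three pieces
    have hb1 : ∫ y in Set.Ioc (0:ℝ) 1, ψ y ≤ 1 := by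
      have hmono : ∫ y in Set.Ioc (0:ℝ) 1, ψ y ≤ ∫ _y in Set.Ioc (0:ℝ) 1, (1:ℝ) := by
        refine setIntegral_mono_on hi1 (integrableOn_const ?_)
          measurableSet_Ioc fun y hy => ?_
        · rw [Real.volume_Ioc]
          exact ENNReal.ofReal_ne_top
        · obtain ⟨hy0, hy1⟩ := hy
          have hdy : (0:ℝ) < κ + y := by linarith
          have hm1 : (1:ℝ) ≤ max 1 y := le_max_left _ _
          have f1 : y ^ 2 ≤ 1 := pow_le_one₀ hy0.le hy1
          have f2 : (κ / (κ + y)) ^ 2 ≤ 1 :=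
            pow_le_one₀ (by positivity) ((div_le_one hdy).2 (by linarith))
          have f3 : ((max 1 y) ^ 3)⁻¹ ≤ 1 := by
            rw [inv_le_one_iff₀]
            right
            exact one_le_pow₀ hm1
          calc ψ y = y ^ 2 * ((κ / (κ + y)) ^ 2 * ((max 1 y) ^ 3)⁻¹) := by
                rw [hψdef, hφdef]
            _ ≤ 1 * (1 * 1) := by
                refine mul_le_mul f1 (mul_le_mul f2 f3 (by positivity) zero_le_one)
                  (by positivity) zero_le_one
            _ = 1 := by norm_num
      calc ∫ y in Set.Ioc (0:ℝ) 1, ψ y ≤ ∫ _y in Set.Ioc (0:ℝ) 1, (1:ℝ) := hmono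
        _ = 1 := by
          rw [MeasureTheory.setIntegral_const]
          simp [Real.volume_Ioc]
    have hb2 : ∫ y in Set.Ioc (1:ℝ) κ, ψ y ≤ Real.log κ := by
      have hIκ : IntegrableOn (fun y : ℝ => y⁻¹) (Set.Ioc (1:ℝ) κ) := by
        have h : IntervalIntegrable (fun y : ℝ => y⁻¹) volume 1 κ := by
          refine intervalIntegral.intervalIntegrable_inv (fun x hx => ?_) continuousOn_id
          rw [Set.uIcc_of_le hκ] at hx
          have : (1:ℝ) ≤ x := hx.1
          show x ≠ 0
          exact ne_of_gt (by linarith)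
        exact (intervalIntegrable_iff_integrableOn_Ioc_of_le hκ).1 h
      have hmono : ∫ y in Set.Ioc (1:ℝ) κ, ψ y ≤ ∫ y in Set.Ioc (1:ℝ) κ, y⁻¹ := by
        refine setIntegral_mono_on hi2 hIκ measurableSet_Ioc fun y hy => ?_
        obtain ⟨hy1, hyκ⟩ := hy
        have hy0 : (0:ℝ) < y := lt_trans one_pos hy1
        have hdy : (0:ℝ) < κ + y := by linarith
        have hmax : max 1 y = y := max_eq_right hy1.le
        have f2 : (κ / (κ + y)) ^ 2 ≤ 1 :=
          pow_le_one₀ (by positivity) ((div_le_one hdy).2 (by linarith))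
        have e : y ^ 2 * (y ^ 3)⁻¹ = y⁻¹ := by
          field_simp
        calc ψ y = y ^ 2 * ((κ / (κ + y)) ^ 2 * ((max 1 y) ^ 3)⁻¹) := by
              rw [hψdef, hφdef]
          _ ≤ y ^ 2 * (1 * (y ^ 3)⁻¹) := by
              rw [hmax]
              refine mul_le_mul_of_nonneg_left ?_ (by positivity)
              exact mul_le_mul_of_nonneg_right f2 (by positivity)
          _ = y ^ 2 * (y ^ 3)⁻¹ := by ring
          _ = y⁻¹ := e
      have hval : ∫ y in Set.Ioc (1:ℝ) κ, (y:ℝ)⁻¹ = Real.log κ := by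
        rw [← intervalIntegral.integral_of_le hκ, integral_inv_of_pos one_pos hκ0,
          div_one]
      linarith [hmono, hval.le, hval.ge]
    have hb3 : ∫ y in Set.Ioi κ, ψ y ≤ 1 / 2 := by
      have hIκ3 : IntegrableOn (fun y : ℝ => κ ^ 2 * y ^ (-(3:ℝ))) (Set.Ioi κ) :=
        (integrableOn_Ioi_rpow_of_lt (by norm_num) hκ0).const_mul _
      have hmono : ∫ y in Set.Ioi κ, ψ y ≤ ∫ y in Set.Ioi κ, κ ^ 2 * y ^ (-(3:ℝ)) := by
        refine setIntegral_mono_on hi3 hIκ3 measurableSet_Ioi fun y hy => ?_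
        have hyκ : κ < y := hy
        have hy0 : (0:ℝ) < y := lt_of_le_of_lt hκ0.le hyκ
        have hy1 : (1:ℝ) ≤ y := le_trans hκ hyκ.le
        have hdy : (0:ℝ) < κ + y := by linarith
        have hmax : max 1 y = y := max_eq_right hy1
        have f2 : (κ / (κ + y)) ^ 2 ≤ (κ / y) ^ 2 := by
          refine pow_le_pow_left₀ (by positivity) ?_ 2
          gcongr
          linarith
        have e2 : y ^ (-(3:ℝ)) = (y ^ 3)⁻¹ := by
          rw [← Real.rpow_natCast y 3, ← Real.rpow_neg hy0.le]
          norm_num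
        have e3 : y ^ 2 * ((κ / y) ^ 2 * (y ^ 3)⁻¹) = κ ^ 2 * (y ^ 3)⁻¹ := by
          field_simp
        calc ψ y = y ^ 2 * ((κ / (κ + y)) ^ 2 * ((max 1 y) ^ 3)⁻¹) := by
              rw [hψdef, hφdef]
          _ ≤ y ^ 2 * ((κ / y) ^ 2 * (y ^ 3)⁻¹) := by
              rw [hmax]
              refine mul_le_mul_of_nonneg_left ?_ (by positivity)
              exact mul_le_mul_of_nonneg_right f2 (by positivity)
          _ = κ ^ 2 * (y ^ 3)⁻¹ := e3
          _ = κ ^ 2 * y ^ (-(3:ℝ)) := by rw [e2]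
      have hval : ∫ y in Set.Ioi κ, κ ^ 2 * y ^ (-(3:ℝ)) = 1 / 2 := by
        rw [MeasureTheory.integral_const_mul,
          integral_Ioi_rpow_of_lt (by norm_num) hκ0]
        have e : κ ^ 2 * κ ^ ((-3:ℝ) + 1) = 1 := by
          rw [show ((-3:ℝ) + 1) = -2 by norm_num, ← Real.rpow_natCast κ 2,
            ← Real.rpow_add hκ0]
          norm_num
        have e' : (-(3:ℝ)) + 1 = (-3:ℝ) + 1 := by norm_num
        rw [show -κ ^ ((-3:ℝ) + 1) / ((-3:ℝ) + 1) = κ ^ ((-3:ℝ) + 1) / 2 by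
          rw [show ((-3:ℝ) + 1) = -2 by norm_num]; ring]
        rw [mul_div_assoc'] at *
        rw [show κ ^ 2 * κ ^ ((-3:ℝ) + 1) / 2 = (κ ^ 2 * κ ^ ((-3:ℝ) + 1)) / 2 by ring, e]
      linarith [hmono, hval.le]
    have hI1 : ∫ y in Set.Ioi (0:ℝ), ψ y ≤ 3 / 2 + Real.log κ := by
      rw [hsplit]
      linarith
    have hψIoi0 : 0 ≤ ∫ y in Set.Ioi (0:ℝ), ψ y := by
      refine setIntegral_nonneg measurableSet_Ioi fun y hy => hψ0 y (le_of_lt hy)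
    calc ∫ ξ, F ξ ≤ ∫ ξ, G ξ := integral_mono hFint hGint hFle
      _ = B * (3 * (V * ∫ y in Set.Ioi (0:ℝ), ψ y)) := by rw [hGeq, hpolar]
      _ = 3 * V * B * (∫ y in Set.Ioi (0:ℝ), ψ y) := by ring
      _ ≤ 3 * V * B * (3 / 2 + Real.log κ) := by
          refine mul_le_mul_of_nonneg_left hI1 ?_
          exact mul_nonneg (mul_nonneg (by norm_num) hV0) hBpos.le
  refine ⟨fun κ hκ X => (key κ hκ X).1,
    ⟨1 / 2 * ((2 * Real.pi) ^ 3)⁻¹ * (3 * V * B) * (3 / (2 * Real.log 2) + 1), ?_⟩⟩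
  intro κ hκ X
  obtain ⟨hint, hnn, hle⟩ := key κ (by linarith) X
  have hκ0 : (0:ℝ) < κ := by linarith
  have hlog2 : 0 < Real.log 2 := Real.log_pos one_lt_two
  have hlogκ : Real.log 2 ≤ Real.log κ := Real.log_le_log two_pos hκ
  have hlogκ0 : 0 ≤ Real.log κ := le_trans hlog2.le hlogκ
  set I := ∫ ξ : EuclideanSpace ℝ (Fin 3),
    (Real.sqrt (qform a X ξ + 1))⁻¹ * qform A X ξ * ((qform A X ξ + 1) ^ 2)⁻¹ *
      ‖fourierHat ρ (κ⁻¹ • ξ)‖ ^ 2 with hIdef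
  have h3VB : (0:ℝ) ≤ 3 * V * B := mul_nonneg (mul_nonneg (by norm_num) hV0) hBpos.le
  have habs : |(-(1 / 2) * ((2 * Real.pi) ^ 3)⁻¹ * I)| =
      1 / 2 * ((2 * Real.pi) ^ 3)⁻¹ * I := by
    rw [show -(1 / 2 : ℝ) * ((2 * Real.pi) ^ 3)⁻¹ * I =
        -(1 / 2 * ((2 * Real.pi) ^ 3)⁻¹ * I) by ring, abs_neg, abs_of_nonneg]
    exact mul_nonneg (by positivity) hnn
  rw [habs]
  have h32 : 3 / 2 + Real.log κ ≤ (3 / (2 * Real.log 2) + 1) * Real.log κ := by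
    have h1 : 3 / 2 ≤ 3 / (2 * Real.log 2) * Real.log κ := by
      rw [div_mul_eq_mul_div, le_div_iff₀ (by positivity)]
      nlinarith
    nlinarith
  calc 1 / 2 * ((2 * Real.pi) ^ 3)⁻¹ * I
      ≤ 1 / 2 * ((2 * Real.pi) ^ 3)⁻¹ * (3 * V * B * (3 / 2 + Real.log κ)) :=
        mul_le_mul_of_nonneg_left hle (by positivity)
    _ ≤ 1 / 2 * ((2 * Real.pi) ^ 3)⁻¹ *
        (3 * V * B * ((3 / (2 * Real.log 2) + 1) * Real.log κ)) := by
        refine mul_le_mul_of_nonneg_left ?_ (by positivity)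
        exact mul_le_mul_of_nonneg_left h32 h3VB
    _ = 1 / 2 * ((2 * Real.pi) ^ 3)⁻¹ * (3 * V * B) * (3 / (2 * Real.log 2) + 1) *
        Real.log κ := by ring
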